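/- arXiv:2605.19680 — 5 statements merged into one kernel-verified Lean document; each statement's English description precedes it below -/
import Mathlib

section
/- For any subset X ⊆ ℝ and any 0 ≤ r ≤ s, there is a correspondence R between B_r(X) and B_s(X) with dis R ≤ 2(s − r); consequently d_GH(B_r(X), B_s(X)) ≤ s − r. -/
open ENNReal

/-- A correspondence between `X` and `Y`: a relation whose projections are surjective. -/
def IsCorrespondence {X Y : Type*} (R : Set (X × Y)) : Prop :=
  (∀ x : X, ∃ y : Y, (x, y) ∈ R) ∧ (∀ y : Y, ∃ x : X, (x, y) ∈ R)

/-- The distortion of a relation between two (pseudo)metric spaces, valued in `ℝ≥0∞`. -/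
noncomputable def relDis {X Y : Type*} [PseudoMetricSpace X] [PseudoMetricSpace Y]
    (R : Set (X × Y)) : ℝ≥0∞ :=
  ⨆ p ∈ R, ⨆ q ∈ R, ENNReal.ofReal |dist p.1 q.1 - dist p.2 q.2|

/-- The Gromov–Hausdorff distance between two (pseudo)metric spaces, defined (via the
standard characterization `2 d_GH = inf dis R`) as half the infimum of distortions of
correspondences. -/
noncomputable def ghDist (X Y : Type*) [PseudoMetricSpace X] [PseudoMetricSpace Y] : ℝ≥0∞ :=
  (⨅ R ∈ {R : Set (X × Y) | IsCorrespondence R}, relDis R) / 2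

/-- For any nonempty `X ⊆ ℝ` and `0 ≤ r ≤ s`, there is a correspondence `R` between
`B_r(X)` and `B_s(X)` with `dis R ≤ 2(s − r)`; consequently
`d_GH(B_r(X), B_s(X)) ≤ s − r`. -/
theorem stmt_10 (X : Set ℝ) (hX : X.Nonempty) (r s : ℝ) (hr : 0 ≤ r) (hrs : r ≤ s) :
    (∃ R : Set (↥(Metric.cthickening r X) × ↥(Metric.cthickening s X)),
        IsCorrespondence R ∧ relDis R ≤ ENNReal.ofReal (2 * (s - r))) ∧
      ghDist ↥(Metric.cthickening r X) ↥(Metric.cthickening s X) ≤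
        ENNReal.ofReal (s - r) := by
  set A := Metric.cthickening r X
  set B := Metric.cthickening s X
  set R : Set (↥A × ↥B) := {p | dist (p.1 : ℝ) (p.2 : ℝ) ≤ s - r} with hR
  have hC : IsCorrespondence R := by
    constructor
    · intro x
      refine ⟨⟨(x : ℝ), Metric.cthickening_mono hrs X x.2⟩, ?_⟩
      simp [hR, sub_nonneg.2 hrs]
    · intro y
      -- find a point of closure X near y
      have hyd : Metric.infDist (y : ℝ) (closure X) ≤ s := by
        have h1 : EMetric.infEdist (y : ℝ) X ≤ ENNReal.ofReal s :=
          Metric.mem_cthickening_iff.1 y.2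
        have h2 : Metric.infDist (y : ℝ) X ≤ s := by
          have := ENNReal.toReal_mono ENNReal.ofReal_ne_top h1
          rwa [ENNReal.toReal_ofReal (hr.trans hrs)] at this
        rwa [Metric.infDist_closure]
      obtain ⟨p, hpX, hp⟩ := isClosed_closure.exists_infDist_eq_dist
        (closure_nonempty_iff.2 hX) (y : ℝ)
      have hdyp : dist (y : ℝ) p ≤ s := hp ▸ hyd
      set t : ℝ := p - (y : ℝ) with ht
      set x : ℝ := (y : ℝ) + max (-(s - r)) (min t (s - r)) with hx
      have habs : |t| ≤ s := by
        rw [Real.dist_eq] at hdyp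
        rwa [ht, abs_sub_comm]
      have hxp : dist x p ≤ r := by
        rw [Real.dist_eq, abs_le, hx]
        rcases abs_le.1 habs with ⟨h1, h2⟩
        rcases le_total t (s - r) with h3 | h3 <;>
          rcases le_total (-(s - r)) t with h4 | h4
        · rw [min_eq_left h3, max_eq_right h4]; constructor <;> linarith
        · rw [min_eq_left h3, max_eq_left h4]; constructor <;> linarith
        · rw [min_eq_right h3, max_eq_right (by linarith : -(s - r) ≤ s - r)]
          constructor <;> linarith
        · rw [min_eq_right h3, max_eq_right (by linarith : -(s - r) ≤ s - r)]
          constructor <;> linarith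
      have hxA : x ∈ A := by
        rw [show A = Metric.cthickening r (closure X) from (Metric.cthickening_closure).symm]
        exact Metric.closedBall_subset_cthickening hpX r
          (Metric.mem_closedBall.2 hxp)
      refine ⟨⟨x, hxA⟩, ?_⟩
      simp only [hR, Set.mem_setOf_eq]
      rw [Real.dist_eq, hx, add_sub_cancel_left, abs_le]
      exact ⟨le_max_left _ _, max_le (by linarith) (min_le_right _ _)⟩
  have hdis : relDis R ≤ ENNReal.ofReal (2 * (s - r)) := by
    refine iSup₂_le fun p hp => iSup₂_le fun q hq => ENNReal.ofReal_le_ofReal ?_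
    have h1 : dist (p.1 : ↥A) (q.1 : ↥A) = dist (p.1 : ℝ) (q.1 : ℝ) := rfl
    have h2 : dist (p.2 : ↥B) (q.2 : ↥B) = dist (p.2 : ℝ) (q.2 : ℝ) := rfl
    have h3 := dist_dist_dist_le (p.1 : ℝ) (q.1 : ℝ) (p.2 : ℝ) (q.2 : ℝ)
    rw [Real.dist_eq] at h3
    rw [Subtype.dist_eq, Subtype.dist_eq]
    calc |dist (p.1 : ℝ) (q.1 : ℝ) - dist (p.2 : ℝ) (q.2 : ℝ)| ≤
        dist (p.1 : ℝ) (p.2 : ℝ) + dist (q.1 : ℝ) (q.2 : ℝ) := h3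
      _ ≤ (s - r) + (s - r) := add_le_add hp hq
      _ = 2 * (s - r) := by ring
  refine ⟨⟨R, hC, hdis⟩, ?_⟩
  have h1 : ghDist ↥A ↥B ≤ relDis R / 2 := by
    apply ENNReal.div_le_div_right
    exact iInf₂_le R hC
  refine h1.trans ?_
  calc relDis R / 2 ≤ ENNReal.ofReal (2 * (s - r)) / 2 := ENNReal.div_le_div_right hdis 2
    _ = ENNReal.ofReal (s - r) := by
        rw [ENNReal.ofReal_mul (by norm_num : (0:ℝ) ≤ 2), ENNReal.ofReal_ofNat,
          mul_comm, mul_div_assoc, ENNReal.div_self (by norm_num) (by norm_num), mul_one]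
end

section
/- For arbitrary subsets A, B of ℝ, the Gromov–Hausdorff distance satisfies d_GH(A, B) ≤ max{d_GH(A, ℝ), d_GH(B, ℝ)}. -/
open ENNReal

section Aux

open Set EMetric

lemma relDis_pair_le {X Y : Type*} [PseudoMetricSpace X] [PseudoMetricSpace Y]
    {R : Set (X × Y)} {p q : X × Y} (hp : p ∈ R) (hq : q ∈ R) :
    ENNReal.ofReal |dist p.1 q.1 - dist p.2 q.2| ≤ relDis R := by
  unfold relDis
  have h1 : ENNReal.ofReal |dist p.1 q.1 - dist p.2 q.2|
      ≤ ⨆ q' ∈ R, ENNReal.ofReal |dist p.1 q'.1 - dist p.2 q'.2| :=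
    le_iSup₂ (f := fun (q' : X × Y) (_ : q' ∈ R) =>
      ENNReal.ofReal |dist p.1 q'.1 - dist p.2 q'.2|) q hq
  exact h1.trans (le_iSup₂ (f := fun (p' : X × Y) (_ : p' ∈ R) =>
      ⨆ q' ∈ R, ENNReal.ofReal |dist p'.1 q'.1 - dist p'.2 q'.2|) p hp)

lemma relDis_le {X Y : Type*} [PseudoMetricSpace X] [PseudoMetricSpace Y]
    {R : Set (X × Y)} {r : ℝ≥0∞}
    (h : ∀ p ∈ R, ∀ q ∈ R, ENNReal.ofReal |dist p.1 q.1 - dist p.2 q.2| ≤ r) :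
    relDis R ≤ r := by
  unfold relDis
  exact iSup₂_le fun p hp => iSup₂_le fun q hq => h p hp q hq

/-- A metric space isometrically embedded in `ℝ` with image bounded below admits no
correspondence with `ℝ` with finite distortion bound `D`. -/
lemma no_corr_of_bddBelow {X : Type*} [PseudoMetricSpace X] [Nonempty X]
    (f : X → ℝ) (hf : ∀ x y, dist (f x) (f y) = dist x y)
    (c : ℝ) (hb : ∀ x, c ≤ f x)
    (R : Set (X × ℝ)) (hR : IsCorrespondence R) (D : ℝ)
    (hD : ∀ p ∈ R, ∀ q ∈ R, |dist p.1 q.1 - dist p.2 q.2| ≤ D) : False := by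
  have key : ∀ (x : X) (r : ℝ), (x, r) ∈ R → ∀ (y : X) (s : ℝ), (y, s) ∈ R →
      |(|f x - f y|) - (|r - s|)| ≤ D := by
    intro x r hx y s hy
    have := hD _ hx _ hy
    dsimp only at this
    rwa [← hf, Real.dist_eq, Real.dist_eq] at this
  have hne : (Set.range f).Nonempty := Set.range_nonempty f
  have hbdd : BddBelow (Set.range f) := ⟨c, by rintro _ ⟨x, rfl⟩; exact hb x⟩
  set m := sInf (Set.range f) with hm
  obtain ⟨_, ⟨x₀, rfl⟩, hx₀⟩ := Real.lt_sInf_add_pos hne one_pos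
  obtain ⟨r₀, hr₀⟩ := hR.1 x₀
  have hD0 : 0 ≤ D := by
    have := key _ _ hr₀ _ _ hr₀
    simp at this
    linarith
  set K := 2 * D + 2 with hK
  obtain ⟨xp, hxp⟩ := hR.2 (r₀ + K)
  obtain ⟨xm, hxm⟩ := hR.2 (r₀ - K)
  have e1 : |r₀ + K - r₀| = K := by rw [show r₀ + K - r₀ = K by ring]; exact abs_of_nonneg (by linarith)
  have e2 : |r₀ - K - r₀| = K := by
    rw [show r₀ - K - r₀ = -K by ring, abs_neg]; exact abs_of_nonneg (by linarith)
  have e3 : |r₀ + K - (r₀ - K)| = 2 * K := by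
    rw [show r₀ + K - (r₀ - K) = 2 * K by ring]; exact abs_of_nonneg (by linarith)
  have h1 : |(|f xp - f x₀|) - K| ≤ D := by
    have := key _ _ hxp _ _ hr₀; rwa [e1] at this
  have h2 : |(|f xm - f x₀|) - K| ≤ D := by
    have := key _ _ hxm _ _ hr₀; rwa [e2] at this
  have h3 : |(|f xp - f xm|) - 2 * K| ≤ D := by
    have := key _ _ hxp _ _ hxm; rwa [e3] at this
  have hmp : m ≤ f xp := csInf_le hbdd ⟨xp, rfl⟩
  have hmm : m ≤ f xm := csInf_le hbdd ⟨xm, rfl⟩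
  have hup : K - D ≤ f xp - f x₀ ∧ f xp - f x₀ ≤ K + D := by
    rcases abs_cases (f xp - f x₀) with ⟨he, h0⟩ | ⟨he, h0⟩ <;>
      rcases abs_le.mp h1 with ⟨ha, hb'⟩ <;>
      constructor <;> linarith
  have hum : K - D ≤ f xm - f x₀ ∧ f xm - f x₀ ≤ K + D := by
    rcases abs_cases (f xm - f x₀) with ⟨he, h0⟩ | ⟨he, h0⟩ <;>
      rcases abs_le.mp h2 with ⟨ha, hb'⟩ <;>
      constructor <;> linarith
  rcases abs_cases (f xp - f xm) with ⟨he, h0⟩ | ⟨he, h0⟩ <;>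
    rcases abs_le.mp h3 with ⟨ha, hb'⟩ <;>
    linarith [hup.1, hup.2, hum.1, hum.2]

/-- The core gap argument: a correspondence between `A ⊆ ℝ` and `ℝ` with distortion `≤ D`
cannot leave a gap of radius `ρ > D/2` around any real `t`. -/
lemma no_gap (A : Set ℝ) (hA : A.Nonempty) (R : Set (↥A × ℝ)) (hR : IsCorrespondence R)
    (D : ℝ) (hD : ∀ p ∈ R, ∀ q ∈ R, |dist p.1 q.1 - dist p.2 q.2| ≤ D)
    (t ρ : ℝ) (hρ : D / 2 < ρ) (hgap : ∀ a ∈ A, ρ ≤ |t - a|) : False := by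
  have : Nonempty ↥A := hA.to_subtype
  have hD0 : 0 ≤ D := by
    obtain ⟨x⟩ := this
    obtain ⟨r, hr⟩ := hR.1 x
    have := hD _ hr _ hr
    simp at this
    linarith
  obtain ⟨δ, hδdef⟩ : ∃ δ : ℝ, δ = ρ - D / 2 := ⟨_, rfl⟩
  have hδ : 0 < δ := by rw [hδdef]; linarith
  -- step: points whose real coordinates are within δ lie on the same side of t
  have step : ∀ p ∈ R, ∀ q ∈ R, |p.2 - q.2| ≤ δ → (t ≤ (p.1 : ℝ) ↔ t ≤ (q.1 : ℝ)) := by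
    have aux : ∀ p ∈ R, ∀ q ∈ R, |p.2 - q.2| ≤ δ → t ≤ (p.1 : ℝ) → t ≤ (q.1 : ℝ) := by
      intro p hp q hq hle hx
      by_contra hx'
      push_neg at hx'
      have g1 : ρ ≤ |t - (p.1 : ℝ)| := hgap _ p.1.2
      have g2 : ρ ≤ |t - (q.1 : ℝ)| := hgap _ q.1.2
      have g1' : t + ρ ≤ (p.1 : ℝ) := by
        rcases abs_cases (t - (p.1 : ℝ)) with ⟨he, h0⟩ | ⟨he, h0⟩ <;> linarith
      have g2' : (q.1 : ℝ) ≤ t - ρ := by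
        rcases abs_cases (t - (q.1 : ℝ)) with ⟨he, h0⟩ | ⟨he, h0⟩ <;> linarith
      have hdist := hD _ hp _ hq
      rw [Subtype.dist_eq, Real.dist_eq, Real.dist_eq] at hdist
      have e1 : |(p.1 : ℝ) - (q.1 : ℝ)| = (p.1 : ℝ) - (q.1 : ℝ) := abs_of_nonneg (by linarith)
      rw [e1] at hdist
      rcases abs_le.mp hdist with ⟨ha, hb⟩
      linarith [hle, hδdef, hρ]
    intro p hp q hq hle
    exact ⟨aux p hp q hq hle, aux q hq p hp (by rwa [abs_sub_comm])⟩
  -- chain the step lemma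
  have chain : ∀ n : ℕ, ∀ p ∈ R, ∀ q ∈ R, |p.2 - q.2| ≤ (n + 1) * δ →
      (t ≤ (p.1 : ℝ) ↔ t ≤ (q.1 : ℝ)) := by
    intro n
    induction n with
    | zero => intro p hp q hq h; exact step p hp q hq (by simpa using h)
    | succ n ih =>
      intro p hp q hq h
      by_cases hle : |p.2 - q.2| ≤ (n + 1) * δ
      · exact ih p hp q hq hle
      push_neg at hle
      rcases le_total p.2 q.2 with hpq | hpq
      · obtain ⟨x', hx'⟩ := hR.2 (q.2 - δ)
        have h1 : |p.2 - (q.2 - δ)| ≤ (n + 1) * δ := by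
          have habs : |p.2 - q.2| = q.2 - p.2 := by
            rw [abs_sub_comm]; exact abs_of_nonneg (by linarith)
          rw [habs] at h hle
          rw [abs_le]
          push_cast at h hle ⊢
          constructor <;> nlinarith [hδ, Nat.cast_nonneg (α := ℝ) n]
        have h2 : |((x', q.2 - δ) : ↥A × ℝ).2 - q.2| ≤ δ := by
          simp only
          rw [show q.2 - δ - q.2 = -δ by ring, abs_neg, abs_of_nonneg hδ.le]
        exact (ih p hp _ hx' h1).trans (step _ hx' q hq h2)
      · obtain ⟨x', hx'⟩ := hR.2 (q.2 + δ)
        have h1 : |p.2 - (q.2 + δ)| ≤ (n + 1) * δ := by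
          have habs : |p.2 - q.2| = p.2 - q.2 := abs_of_nonneg (by linarith)
          rw [habs] at h hle
          rw [abs_le]
          push_cast at h hle ⊢
          constructor <;> nlinarith [hδ, Nat.cast_nonneg (α := ℝ) n]
        have h2 : |((x', q.2 + δ) : ↥A × ℝ).2 - q.2| ≤ δ := by
          simp only
          rw [show q.2 + δ - q.2 = δ by ring, abs_of_nonneg hδ.le]
        exact (ih p hp _ hx' h1).trans (step _ hx' q hq h2)
  -- all points of R lie on the same side of t
  obtain ⟨a₀, ha₀⟩ := hA
  obtain ⟨r₀, hr₀⟩ := hR.1 ⟨a₀, ha₀⟩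
  have hside : ∀ q ∈ R, (t ≤ (q.1 : ℝ) ↔ t ≤ a₀) := by
    intro q hq
    obtain ⟨n, hn⟩ := exists_nat_ge (|q.2 - r₀| / δ)
    have hq' : |q.2 - r₀| ≤ (n + 1) * δ := by
      have := (div_le_iff₀ hδ).mp hn
      nlinarith [hδ]
    exact chain n q hq _ hr₀ hq'
  by_cases ht : t ≤ a₀
  · -- everything is ≥ t : A is bounded below
    have hb : ∀ x : ↥A, t ≤ (x : ℝ) := by
      intro x
      obtain ⟨r, hr⟩ := hR.1 x
      exact (hside _ hr).mpr ht
    exact no_corr_of_bddBelow (fun x : ↥A => (x : ℝ))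
      (fun x y => (Subtype.dist_eq x y).symm) t hb R hR D hD
  · -- everything is < t : A is bounded above, use the reflected embedding
    have hb : ∀ x : ↥A, -t ≤ -(x : ℝ) := by
      intro x
      obtain ⟨r, hr⟩ := hR.1 x
      have hxlt : ¬ t ≤ ((⟨x, r⟩ : ↥A × ℝ).1 : ℝ) := fun h => ht ((hside _ hr).mp h)
      push_neg at hxlt
      simp only at hxlt
      linarith
    refine no_corr_of_bddBelow (fun x : ↥A => -(x : ℝ)) ?_ (-t) hb R hR D hD
    intro x y
    show dist (-(x : ℝ)) (-(y : ℝ)) = dist x y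
    rw [Subtype.dist_eq, Real.dist_eq, Real.dist_eq,
      show -(x : ℝ) - -(y : ℝ) = -((x : ℝ) - y) by ring, abs_neg]

/-- For a nonempty `A ⊆ ℝ`, any correspondence between `A` and `ℝ` has distortion at least
twice the Hausdorff distance between `A` and `ℝ`. -/
lemma hausdorff_le_relDis (A : Set ℝ) (hA : A.Nonempty) (R : Set (↥A × ℝ))
    (hR : IsCorrespondence R) :
    hausdorffEdist (Set.univ : Set ℝ) A ≤ relDis R / 2 := by
  rcases eq_or_ne (relDis R) ⊤ with htop | hfin
  · rw [htop]
    simp [ENNReal.top_div_of_ne_top]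
  set D := (relDis R).toReal with hDdef
  have hD0 : 0 ≤ D := ENNReal.toReal_nonneg
  have hD : ∀ p ∈ R, ∀ q ∈ R, |dist p.1 q.1 - dist p.2 q.2| ≤ D := fun p hp q hq =>
    (ENNReal.ofReal_le_iff_le_toReal hfin).mp (relDis_pair_le hp hq)
  have hhalf : relDis R / 2 = ENNReal.ofReal (D / 2) := by
    rw [ENNReal.ofReal_div_of_pos two_pos, ENNReal.ofReal_toReal hfin]
    norm_num
  rw [hhalf]
  apply hausdorffEdist_le_of_infEdist
  · intro t _
    by_contra hcon
    push_neg at hcon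
    obtain ⟨ρ, hρ0, h1, h2⟩ := ENNReal.lt_iff_exists_real_btwn.mp hcon
    have hρ : D / 2 < ρ := by
      by_contra hle
      push_neg at hle
      exact absurd (ENNReal.ofReal_le_ofReal hle) (not_le.mpr h1)
    have hgap : ∀ a ∈ A, ρ ≤ |t - a| := by
      intro a ha
      have h3 : ENNReal.ofReal ρ ≤ edist t a := le_trans h2.le (infEdist_le_edist_of_mem ha)
      rw [edist_dist] at h3
      have h4 := (ENNReal.ofReal_le_ofReal_iff dist_nonneg).mp h3
      rwa [Real.dist_eq] at h4
    exact no_gap A hA R hR D hD t ρ hρ hgap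
  · intro a _
    rw [infEdist_zero_of_mem (Set.mem_univ (a : ℝ))]
    exact zero_le

lemma ghDist_le_of_corr {X Y : Type*} [PseudoMetricSpace X] [PseudoMetricSpace Y]
    {R : Set (X × Y)} (hR : IsCorrespondence R) : ghDist X Y ≤ relDis R / 2 := by
  unfold ghDist
  refine ENNReal.div_le_div_right ?_ 2
  exact iInf₂_le (f := fun (R' : Set (X × Y))
    (_ : R' ∈ {R : Set (X × Y) | IsCorrespondence R}) => relDis R') R hR

lemma hausdorff_le_ghDist (A : Set ℝ) (hA : A.Nonempty) :
    hausdorffEdist (Set.univ : Set ℝ) A ≤ ghDist ↥A ℝ := by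
  unfold ghDist
  rw [ENNReal.le_div_iff_mul_le (Or.inl two_ne_zero) (Or.inl ENNReal.ofNat_ne_top)]
  refine le_iInf₂ fun R hR => ?_
  rw [← ENNReal.le_div_iff_mul_le (Or.inl two_ne_zero) (Or.inl ENNReal.ofNat_ne_top)]
  exact hausdorff_le_relDis A hA R hR

lemma ghDist_le_hausdorff (A B : Set ℝ) (hA : A.Nonempty) (hB : B.Nonempty) :
    ghDist ↥A ↥B ≤ hausdorffEdist A B := by
  have main : ∀ r : ℝ, hausdorffEdist A B < ENNReal.ofReal r →
      ghDist ↥A ↥B ≤ ENNReal.ofReal r := by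
    intro r hr
    have hr0 : 0 < r := by
      by_contra h
      push_neg at h
      rw [ENNReal.ofReal_eq_zero.mpr h] at hr
      exact absurd hr (by simp)
    set R : Set (↥A × ↥B) := {p | dist (p.1 : ℝ) (p.2 : ℝ) ≤ r} with hRdef
    have hcorr : IsCorrespondence R := by
      constructor
      · intro a
        have h1 : infEdist (a : ℝ) B < ENNReal.ofReal r :=
          lt_of_le_of_lt (infEdist_le_hausdorffEdist_of_mem a.2) hr
        obtain ⟨b, hb, hb2⟩ := infEdist_lt_iff.mp h1
        refine ⟨⟨b, hb⟩, ?_⟩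
        rw [edist_dist] at hb2
        have : dist (a : ℝ) b < r := by
          by_contra hge
          push_neg at hge
          exact absurd (ENNReal.ofReal_le_ofReal hge) (not_le.mpr hb2)
        exact le_of_lt this
      · intro b
        have h1 : infEdist (b : ℝ) A < ENNReal.ofReal r := by
          rw [EMetric.hausdorffEdist, hausdorffEdist_comm] at hr
          exact lt_of_le_of_lt (infEdist_le_hausdorffEdist_of_mem b.2) hr
        obtain ⟨a, ha, ha2⟩ := infEdist_lt_iff.mp h1
        refine ⟨⟨a, ha⟩, ?_⟩
        rw [edist_dist] at ha2
        have : dist (b : ℝ) a < r := by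
          by_contra hge
          push_neg at hge
          exact absurd (ENNReal.ofReal_le_ofReal hge) (not_le.mpr ha2)
        show dist (a : ℝ) (b : ℝ) ≤ r
        rw [dist_comm]
        exact le_of_lt this
    have hdis : relDis R ≤ ENNReal.ofReal (2 * r) := by
      refine relDis_le fun p hp q hq => ?_
      apply ENNReal.ofReal_le_ofReal
      have hp' : dist (p.1 : ℝ) (p.2 : ℝ) ≤ r := hp
      have hq' : dist (q.1 : ℝ) (q.2 : ℝ) ≤ r := hq
      rw [Subtype.dist_eq p.1 q.1, Subtype.dist_eq p.2 q.2]
      rw [Real.dist_eq] at hp' hq' ⊢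
      rw [Real.dist_eq]
      have t1 : |(|(p.1 : ℝ) - (q.1 : ℝ)|) - (|(p.2 : ℝ) - (q.2 : ℝ)|)| ≤
          |((p.1 : ℝ) - (q.1 : ℝ)) - ((p.2 : ℝ) - (q.2 : ℝ))| := abs_abs_sub_abs_le_abs_sub _ _
      have t2 : |((p.1 : ℝ) - (q.1 : ℝ)) - ((p.2 : ℝ) - (q.2 : ℝ))| ≤
          |(p.1 : ℝ) - (p.2 : ℝ)| + |(q.1 : ℝ) - (q.2 : ℝ)| := by
        rw [show ((p.1 : ℝ) - (q.1 : ℝ)) - ((p.2 : ℝ) - (q.2 : ℝ))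
            = ((p.1 : ℝ) - (p.2 : ℝ)) - ((q.1 : ℝ) - (q.2 : ℝ)) by ring]
        exact abs_sub _ _
      linarith
    have h2r : ENNReal.ofReal (2 * r) / 2 = ENNReal.ofReal r := by
      rw [show (2:ℝ≥0∞) = ENNReal.ofReal 2 by norm_num]
      rw [← ENNReal.ofReal_div_of_pos two_pos]
      norm_num
    calc ghDist ↥A ↥B ≤ relDis R / 2 := ghDist_le_of_corr hcorr
      _ ≤ ENNReal.ofReal (2 * r) / 2 := ENNReal.div_le_div_right hdis 2
      _ = ENNReal.ofReal r := h2r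
  apply ENNReal.le_of_forall_pos_le_add
  intro ε hε hfin
  set d := (hausdorffEdist A B).toReal with hd
  have hfin' : hausdorffEdist A B ≠ ⊤ := hfin.ne
  have hEq : hausdorffEdist A B = ENNReal.ofReal d := (ENNReal.ofReal_toReal hfin').symm
  have hlt : hausdorffEdist A B < ENNReal.ofReal (d + ε) := by
    rw [hEq]
    apply ENNReal.ofReal_lt_ofReal_iff_of_nonneg ENNReal.toReal_nonneg |>.mpr
    have : (0:ℝ) < ε := hε
    linarith
  have := main (d + ε) hlt
  rw [ENNReal.ofReal_add ENNReal.toReal_nonneg (by positivity), ← hEq,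
    ENNReal.ofReal_coe_nnreal] at this
  exact this

end Aux

/-- For arbitrary nonempty subsets `A, B` of `ℝ`,
`d_GH(A, B) ≤ max {d_GH(A, ℝ), d_GH(B, ℝ)}`. -/
theorem stmt_11 (A B : Set ℝ) (hA : A.Nonempty) (hB : B.Nonempty) :
    ghDist ↥A ↥B ≤ max (ghDist ↥A ℝ) (ghDist ↥B ℝ) := by
  have h1 := ghDist_le_hausdorff A B hA hB
  have h2 : EMetric.hausdorffEdist A B ≤
      max (EMetric.hausdorffEdist (Set.univ : Set ℝ) A)
        (EMetric.hausdorffEdist (Set.univ : Set ℝ) B) := by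
    apply EMetric.hausdorffEdist_le_of_infEdist
    · intro a _
      exact le_trans (EMetric.infEdist_le_hausdorffEdist_of_mem (Set.mem_univ a))
        (le_max_right _ _)
    · intro b _
      exact le_trans (EMetric.infEdist_le_hausdorffEdist_of_mem (Set.mem_univ b))
        (le_max_left _ _)
  exact h1.trans (h2.trans (max_le_max (hausdorff_le_ghDist A hA) (hausdorff_le_ghDist B hB)))
end

section
/- For all λ > 1, the Gromov–Hausdorff distance between ℤ (with the Euclidean metric) and λℤ is at least 1/2. -/
open ENNReal

lemma intKey (l : ℝ) (hl : 1 < l) (a : ℤ → ℤ)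
    (H : ∀ n m : ℤ, |(|(n : ℝ) - (m : ℝ)|) - l * (|(a n : ℝ) - (a m : ℝ)|)| < 1) : False := by
  have hinj : ∀ n m : ℤ, a n = a m → n = m := by
    intro n m h
    have h1 := H n m
    rw [h] at h1
    simp at h1
    have h2 : |n - m| < (1 : ℤ) := by exact_mod_cast h1
    rw [abs_lt] at h2
    omega
  have step : ∀ n : ℤ, a (n + 1) - a n = 1 ∨ a (n + 1) - a n = -1 := by
    intro n
    have h1 := H (n + 1) n
    have hne : a (n + 1) ≠ a n := fun h => by have := hinj _ _ h; omega
    have hx : |(a (n + 1) : ℝ) - (a n : ℝ)| = ((|a (n + 1) - a n| : ℤ) : ℝ) := by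
      push_cast
      rfl
    have hd : |((n + 1 : ℤ) : ℝ) - (n : ℝ)| = 1 := by push_cast; simp
    rw [hd, hx, abs_lt] at h1
    have h2 : l * ((|a (n + 1) - a n| : ℤ) : ℝ) < 2 := by linarith
    have habs : |a (n + 1) - a n| < 2 := by
      by_contra hc
      push_neg at hc
      have hc' : (2 : ℝ) ≤ ((|a (n + 1) - a n| : ℤ) : ℝ) := by exact_mod_cast hc
      nlinarith
    have hD : a (n + 1) - a n ≠ 0 := fun h => hne (by omega)
    rw [abs_lt] at habs
    omega
  have mono : ∀ n : ℕ, a n = a 0 + n * (a 1 - a 0) ∧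
      a ((n : ℤ) + 1) = a 0 + ((n : ℤ) + 1) * (a 1 - a 0) := by
    intro n
    induction n with
    | zero => constructor <;> simp <;> ring
    | succ n ih =>
      obtain ⟨ih1, ih2⟩ := ih
      constructor
      · push_cast; convert ih2 using 2 <;> push_cast <;> ring
      · have st := step ((n : ℤ) + 1)
        have hs := step 0
        rw [show ((0 : ℤ) + 1) = 1 by ring] at hs
        have hne2 : a ((n : ℤ) + 1 + 1) ≠ a (n : ℤ) := fun h => by
          have := hinj _ _ h; omega
        push_cast
        rw [show ((n : ℤ) + 1 + 1) = ((n : ℤ) + 1) + 1 by ring]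
        rcases hs with h | h <;> rw [h] at ih1 ih2 ⊢ <;> omega
  have hs := step 0
  rw [show ((0 : ℤ) + 1) = 1 by ring] at hs
  obtain ⟨N, hN⟩ := exists_nat_gt (1 / (l - 1))
  have hm := (mono N).1
  have hA : |(a (N : ℤ) : ℝ) - (a 0 : ℝ)| = (N : ℝ) := by
    have : a (N : ℤ) - a 0 = (N : ℤ) * (a 1 - a 0) := by omega
    have h2 : (a (N : ℤ) : ℝ) - (a 0 : ℝ) = ((N : ℤ) * (a 1 - a 0) : ℤ) := by
      exact_mod_cast congrArg (fun z : ℤ => (z : ℝ)) this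
    rw [h2]
    push_cast
    rw [abs_mul]
    rcases hs with h | h
    · have hr : (a 1 : ℝ) - (a 0 : ℝ) = 1 := by exact_mod_cast congrArg (fun z : ℤ => (z : ℝ)) h
      rw [hr]
      simp
    · have hr : (a 1 : ℝ) - (a 0 : ℝ) = -1 := by exact_mod_cast congrArg (fun z : ℤ => (z : ℝ)) h
      rw [hr]
      simp
  have hH := H (N : ℤ) 0
  rw [hA] at hH
  simp only [Int.cast_zero, Int.cast_natCast, sub_zero] at hH
  rw [Nat.abs_cast, abs_lt] at hH
  have hpos : (0 : ℝ) < l - 1 := by linarith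
  rw [div_lt_iff₀ hpos] at hN
  nlinarith

lemma mainLem (l : ℝ) (hl : 1 < l)
    (R : Set (↥(Set.range fun n : ℤ => (n : ℝ)) × ↥(Set.range fun n : ℤ => l * n)))
    (hR : IsCorrespondence R) : (1 : ℝ≥0∞) ≤ relDis R := by
  by_contra hlt
  push_neg at hlt
  obtain ⟨h1, _⟩ := hR
  choose y hy using fun n : ℤ => h1 ⟨(n : ℝ), ⟨n, rfl⟩⟩
  choose a ha using fun n : ℤ => (y n).2
  apply intKey l hl a
  intro n m
  have hterm : ENNReal.ofReal
      |dist ((⟨(n : ℝ), ⟨n, rfl⟩⟩ : ↥(Set.range fun k : ℤ => (k : ℝ))))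
        (⟨(m : ℝ), ⟨m, rfl⟩⟩ : ↥(Set.range fun k : ℤ => (k : ℝ))) - dist (y n) (y m)|
      ≤ relDis R :=
    le_iSup₂_of_le (⟨_, y n⟩) (hy n) (le_iSup₂_of_le (⟨_, y m⟩) (hy m) le_rfl)
  have hreal : |dist ((⟨(n : ℝ), ⟨n, rfl⟩⟩ : ↥(Set.range fun k : ℤ => (k : ℝ))))
        (⟨(m : ℝ), ⟨m, rfl⟩⟩ : ↥(Set.range fun k : ℤ => (k : ℝ))) - dist (y n) (y m)| < 1 := by
    by_contra hc
    push_neg at hc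
    have : (1 : ℝ≥0∞) ≤ ENNReal.ofReal _ := ENNReal.one_le_ofReal.mpr hc
    exact absurd (lt_of_le_of_lt (this.trans hterm) hlt) (lt_irrefl _)
  have hd1 : dist ((⟨(n : ℝ), ⟨n, rfl⟩⟩ : ↥(Set.range fun k : ℤ => (k : ℝ))))
      (⟨(m : ℝ), ⟨m, rfl⟩⟩ : ↥(Set.range fun k : ℤ => (k : ℝ))) = |(n : ℝ) - (m : ℝ)| := by
    rw [Subtype.dist_eq, Real.dist_eq]
  have hd2 : dist (y n) (y m) = l * |(a n : ℝ) - (a m : ℝ)| := by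
    rw [Subtype.dist_eq, Real.dist_eq, ← ha n, ← ha m, ← mul_sub, abs_mul,
      abs_of_pos (by linarith : (0 : ℝ) < l)]
  rw [hd1, hd2] at hreal
  exact hreal

/-- For all `λ > 1`, the Gromov–Hausdorff distance between `ℤ` and `λℤ`
(as subsets of `ℝ` with the Euclidean metric) is at least `1/2`. -/
theorem stmt_14 (l : ℝ) (hl : 1 < l) :
    (1 / 2 : ℝ≥0∞) ≤
      ghDist ↥(Set.range fun n : ℤ => (n : ℝ)) ↥(Set.range fun n : ℤ => l * n) := by
  have h1 : (1 : ℝ≥0∞) ≤ ⨅ R ∈ {R : Set (↥(Set.range fun n : ℤ => (n : ℝ)) ×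
      ↥(Set.range fun n : ℤ => l * n)) | IsCorrespondence R}, relDis R :=
    le_iInf₂ fun R hR => mainLem l hl R hR
  exact ENNReal.div_le_div_right h1 2
end

section
/- Let X = {3ⁿ : n ∈ ℕ} ⊆ ℝ with the induced metric, and 2X = {2·3ⁿ : n ∈ ℕ}. Then d_GH(X, 2X) = ∞. -/
open ENNReal

lemma key_pow (n m : ℕ) : (3:ℝ)^n ≤ |(3:ℝ)^(n+1) - 2 * 3^m| := by
  have hs : (3:ℝ)^(n+1) = 3 * 3^n := by ring
  have q0 : (0:ℝ) < 3^n := pow_pos (by norm_num) n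
  have qm : (0:ℝ) < 3^m := pow_pos (by norm_num) m
  rcases le_or_gt m n with h | h
  · have h1 : (3:ℝ)^m ≤ 3^n := pow_le_pow_right₀ (by norm_num) h
    rw [abs_of_nonneg (by nlinarith)]
    nlinarith
  · have h1 : (3:ℝ)^(n+1) ≤ 3^m := pow_le_pow_right₀ (by norm_num) h
    rw [abs_of_nonpos (by nlinarith)]
    nlinarith

/-- For `X = {3^n : n ∈ ℕ} ⊆ ℝ` and `2X = {2 · 3^n : n ∈ ℕ}`, `d_GH(X, 2X) = ∞`. -/
theorem stmt_15 :
    ghDist ↥(Set.range fun n : ℕ => (3 : ℝ) ^ n)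
      ↥(Set.range fun n : ℕ => 2 * (3 : ℝ) ^ n) = ⊤ := by
  have main : ∀ R ∈ {R : Set (↥(Set.range fun n : ℕ => (3 : ℝ) ^ n) ×
      ↥(Set.range fun n : ℕ => 2 * (3 : ℝ) ^ n)) | IsCorrespondence R}, relDis R = ⊤ := by
    rintro R ⟨h1, _⟩
    by_contra htop
    set C := (relDis R).toReal with hC
    have hbound : ∀ p ∈ R, ∀ q ∈ R, |dist p.1 q.1 - dist p.2 q.2| ≤ C := by
      intro p hp q hq
      have : ENNReal.ofReal |dist p.1 q.1 - dist p.2 q.2| ≤ relDis R :=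
        le_iSup₂_of_le p hp (le_iSup₂_of_le q hq le_rfl)
      rw [ENNReal.ofReal_le_iff_le_toReal htop] at this
      exact this
    -- x1 = 1 = 3^0
    have hx1 : (1:ℝ) ∈ Set.range fun n : ℕ => (3 : ℝ) ^ n := ⟨0, by norm_num⟩
    obtain ⟨y0, hy0R⟩ := h1 ⟨1, hx1⟩
    obtain ⟨m0, hm0⟩ := y0.2
    -- pick n large
    obtain ⟨n, hn⟩ := pow_unbounded_of_one_lt (C + 2 * 3^m0 + 1) (show (1:ℝ) < 3 by norm_num)
    have hxn : (3:ℝ)^(n+1) ∈ Set.range fun n : ℕ => (3 : ℝ) ^ n := ⟨n+1, rfl⟩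
    obtain ⟨yn, hynR⟩ := h1 ⟨(3:ℝ)^(n+1), hxn⟩
    obtain ⟨m, hm⟩ := yn.2
    have hb := hbound _ hynR _ hy0R
    simp only [Subtype.dist_eq, Real.dist_eq] at hb
    have hm' : (2:ℝ) * 3^m = (yn : ℝ) := hm
    have hm0' : (2:ℝ) * 3^m0 = (y0 : ℝ) := hm0
    rw [← hm', ← hm0'] at hb
    have hkey := key_pow n m
    have p0 : (0:ℝ) < 3^n := pow_pos (by norm_num) n
    have p1 : (0:ℝ) < 3^(n+1) := pow_pos (by norm_num) (n+1)
    have pm : (0:ℝ) < 3^m := pow_pos (by norm_num) m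
    have pm0 : (0:ℝ) < 3^m0 := pow_pos (by norm_num) m0
    have o1 : (1:ℝ) ≤ 3^(n+1) := one_le_pow₀ (by norm_num)
    have o0 : (1:ℝ) ≤ 3^m0 := one_le_pow₀ (by norm_num)
    have om : (1:ℝ) ≤ 3^m := one_le_pow₀ (by norm_num)
    rcases abs_cases ((3:ℝ)^(n+1) - 1 - |2 * 3 ^ m - 2 * 3 ^ m0|) with ⟨e1, e2⟩ | ⟨e1, e2⟩ <;>
    rcases abs_cases ((2:ℝ) * 3 ^ m - 2 * 3 ^ m0) with ⟨f1, f2⟩ | ⟨f1, f2⟩ <;>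
    rcases abs_cases ((3:ℝ)^(n+1) - 2 * 3^m) with ⟨g1, g2⟩ | ⟨g1, g2⟩ <;>
    rw [abs_of_nonneg (show (0:ℝ) ≤ 3^(n+1) - 1 by linarith)] at hb <;>
    linarith
  have : (⨅ R ∈ {R : Set (↥(Set.range fun n : ℕ => (3 : ℝ) ^ n) ×
      ↥(Set.range fun n : ℕ => 2 * (3 : ℝ) ^ n)) | IsCorrespondence R}, relDis R) = ⊤ := by
    rw [iInf_eq_top]
    intro R
    rw [iInf_eq_top]
    exact main R
  rw [ghDist, this]
  simp [ENNReal.top_div]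
end

section
/- For a bounded metric space X, the curve λ ↦ λX (X with metric scaled by λ), λ ∈ [0, ∞), is a geodesic in the Gromov–Hausdorff class: d_GH(λX, μX) = |λ − μ| · d_GH(X, Δ₁) = |λ − μ| · diam(X)/2 for all λ, μ ≥ 0. -/
open ENNReal

noncomputable example (A : Set ℝ) : ℝ≥0∞ := ghDist ↥A ℝ

open NNReal

/-- The metric space `λX`: the same underlying set with all distances scaled by `l ≥ 0`. -/
noncomputable def scaled (l : ℝ≥0) (X : Type*) [PseudoMetricSpace X] : PseudoMetricSpace X where
  dist x y := l * dist x y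
  dist_self x := by simp
  dist_comm x y := by simp [dist_comm]
  dist_triangle x y z := by
    show (l : ℝ) * dist x z ≤ (l : ℝ) * dist x y + (l : ℝ) * dist y z
    have h := mul_le_mul_of_nonneg_left (dist_triangle x y z) l.coe_nonneg
    linarith [h]

lemma dist_scaled {X : Type*} [PseudoMetricSpace X] (l : ℝ≥0) (x y : X) :
    @dist X (scaled l X).toDist x y = (l : ℝ) * dist x y := rfl

lemma relDis_scaled_eq {X : Type*} [m : MetricSpace X] [Nonempty X]
    (hX : Bornology.IsBounded (Set.univ : Set X)) (l μ : ℝ≥0) :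
    (⨅ R ∈ {R : Set (X × X) | IsCorrespondence R},
        @relDis X X (scaled l X) (scaled μ X) R) =
      ENNReal.ofReal (|(l : ℝ) - (μ : ℝ)| * Metric.diam (Set.univ : Set X)) := by
  set D : ℝ := Metric.diam (Set.univ : Set X) with hD
  have hD0 : 0 ≤ D := Metric.diam_nonneg
  have hdist : ∀ x y : X, dist x y ≤ D :=
    fun x y => Metric.dist_le_diam_of_mem hX (Set.mem_univ x) (Set.mem_univ y)
  apply le_antisymm
  · -- upper bound via the diagonal correspondence
    have hcorr : ({p : X × X | p.1 = p.2}) ∈ {R : Set (X × X) | IsCorrespondence R} :=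
      ⟨fun x => ⟨x, rfl⟩, fun y => ⟨y, rfl⟩⟩
    refine le_trans (iInf₂_le _ hcorr) ?_
    refine iSup₂_le fun p hp => iSup₂_le fun q hq => ?_
    have hp' : p.1 = p.2 := hp
    have hq' : q.1 = q.2 := hq
    rw [dist_scaled, dist_scaled, ← hp', ← hq']
    apply ENNReal.ofReal_le_ofReal
    have : (l : ℝ) * dist p.1 q.1 - (μ : ℝ) * dist p.1 q.1 = ((l : ℝ) - μ) * dist p.1 q.1 := by
      ring
    rw [this, abs_mul, abs_of_nonneg dist_nonneg]
    exact mul_le_mul_of_nonneg_left (hdist _ _) (abs_nonneg _)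
  · -- lower bound
    refine le_iInf₂ fun R hR => ?_
    by_cases hfin : @relDis X X (scaled l X) (scaled μ X) R = ⊤
    · rw [hfin]; exact le_top
    set r : ℝ := (@relDis X X (scaled l X) (scaled μ X) R).toReal with hr
    have hr0 : 0 ≤ r := ENNReal.toReal_nonneg
    have key : ∀ p ∈ R, ∀ q ∈ R,
        |(l : ℝ) * dist p.1 q.1 - (μ : ℝ) * dist p.2 q.2| ≤ r := by
      intro p hp q hq
      have h1 : ENNReal.ofReal |(l : ℝ) * dist p.1 q.1 - (μ : ℝ) * dist p.2 q.2| ≤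
          @relDis X X (scaled l X) (scaled μ X) R := by
        refine le_trans ?_ (le_iSup₂ (f := fun p (_ : p ∈ R) =>
          ⨆ q ∈ R, ENNReal.ofReal |@dist X (scaled l X).toDist p.1 q.1 -
            @dist X (scaled μ X).toDist p.2 q.2|) p hp)
        refine le_trans ?_ (le_iSup₂ (f := fun q (_ : q ∈ R) =>
          ENNReal.ofReal |@dist X (scaled l X).toDist p.1 q.1 -
            @dist X (scaled μ X).toDist p.2 q.2|) q hq)
        rw [dist_scaled, dist_scaled]
      rw [← ENNReal.ofReal_toReal hfin, ← hr] at h1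
      exact (ENNReal.ofReal_le_ofReal_iff hr0).mp h1
    -- l * D ≤ r + μ * D
    have hb : ∀ (a b : ℝ≥0), (∀ x : X, ∃ y : X, ∀ x' : X, ∃ y' : X,
        |(a : ℝ) * dist x x' - (b : ℝ) * dist y y'| ≤ r) →
        (a : ℝ) * D ≤ r + (b : ℝ) * D := by
      intro a b h
      rcases eq_or_lt_of_le a.coe_nonneg with ha | ha
      · rw [← ha, zero_mul]; positivity
      have hDle : D ≤ (r + (b : ℝ) * D) / a := by
        apply Metric.diam_le_of_forall_dist_le
        · positivity
        · intro x _ x' _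
          obtain ⟨y, hy⟩ := h x
          obtain ⟨y', hy'⟩ := hy x'
          have h2 : (a : ℝ) * dist x x' ≤ r + (b : ℝ) * dist y y' := by
            have := abs_le.mp hy'
            linarith [this.1]
          have h3 : (b : ℝ) * dist y y' ≤ (b : ℝ) * D :=
            mul_le_mul_of_nonneg_left (hdist _ _) b.coe_nonneg
          rw [le_div_iff₀ ha]
          linarith
      calc (a : ℝ) * D ≤ a * ((r + (b : ℝ) * D) / a) :=
            mul_le_mul_of_nonneg_left hDle a.coe_nonneg
        _ = r + (b : ℝ) * D := by field_simp
    have h1 : (l : ℝ) * D ≤ r + (μ : ℝ) * D := by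
      apply hb
      intro x
      obtain ⟨y, hy⟩ := hR.1 x
      refine ⟨y, fun x' => ?_⟩
      obtain ⟨y', hy'⟩ := hR.1 x'
      exact ⟨y', key (x, y) hy (x', y') hy'⟩
    have h2 : (μ : ℝ) * D ≤ r + (l : ℝ) * D := by
      apply hb
      intro x
      obtain ⟨y, hy⟩ := hR.2 x
      refine ⟨y, fun x' => ?_⟩
      obtain ⟨y', hy'⟩ := hR.2 x'
      refine ⟨y', ?_⟩
      have := key (y, x) hy (y', x') hy'
      simpa [abs_sub_comm] using this
    rw [← ENNReal.ofReal_toReal hfin, ← hr]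
    apply ENNReal.ofReal_le_ofReal
    have : |(l : ℝ) - μ| * D = |(l : ℝ) * D - (μ : ℝ) * D| := by
      rw [← sub_mul, abs_mul, abs_of_nonneg hD0]
    rw [this]
    rw [abs_le]
    constructor <;> linarith

/-- For a nonempty bounded metric space `X`, the curve `λ ↦ λX` is a geodesic:
`d_GH(λX, μX) = |λ − μ| · diam(X)/2`. -/
theorem stmt_17 {X : Type*} [m : MetricSpace X] [Nonempty X]
    (hX : Bornology.IsBounded (Set.univ : Set X)) (l μ : ℝ≥0) :
    @ghDist X X (scaled l X) (scaled μ X) =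
      ENNReal.ofReal (|(l : ℝ) - (μ : ℝ)| * Metric.diam (Set.univ : Set X) / 2) := by
  rw [ghDist, relDis_scaled_eq hX l μ, ENNReal.ofReal_div_of_pos (by norm_num : (0:ℝ) < 2)]
  norm_num
end
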